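/- Let μ > 0, κ = (μ+4)/4. The point (x, y) ∈ ℝ³ × ℝ³ with x₃ = 0, y = Σx (where Σ = [[0,-1,0],[1,0,0],[0,0,0]]) satisfies ∇ₓV(x,ν,μ,ε) = Σ²x for all ν ∈ ℝ and all ε ∈ [0,1) if and only if (1+x₁)² + x₂² = 1, where V(x,ν,μ,ε) = (1/(1+ε cos ν))·(-(ε cos ν/2)‖x‖² + (1/κ)W(x,μ) + x₁) and W is as above. -/

import Mathlib

lemma aux_inv_sqrt (u : ℝ → ℝ) (u' x : ℝ) (hu : HasDerivAt u u' x) (h : 0 < u x) :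
    HasDerivAt (fun s => 1 / Real.sqrt (u s)) (-u' / (2 * (Real.sqrt (u x))^3)) x := by
  have h1 : HasDerivAt (fun s => Real.sqrt (u s)) (1 / (2 * Real.sqrt (u x)) * u') x :=
    (Real.hasDerivAt_sqrt h.ne').comp x hu
  have hs : Real.sqrt (u x) ≠ 0 := (Real.sqrt_pos.mpr h).ne'
  have h2 : HasDerivAt (fun s => (Real.sqrt (u s))⁻¹) _ x := h1.inv hs
  simp only [one_div]
  convert h2 using 1
  rw [show Real.sqrt (u x) ^ 3 = u x * Real.sqrt (u x) from by
    rw [pow_succ, Real.sq_sqrt h.le], show Real.sqrt (u x) ^ 2 = u x from Real.sq_sqrt h.le]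
  field_simp

theorem stmt_8 (μ κ : ℝ) (hμ : 0 < μ) (hκ : κ = (μ+4)/4)
    (V : ℝ → ℝ → ℝ → ℝ → ℝ → ℝ)
    (hV : ∀ x₁ x₂ x₃ ν ε, V x₁ x₂ x₃ ν ε =
      (1/(1 + ε * Real.cos ν)) *
        (-(ε * Real.cos ν / 2) * (x₁^2 + x₂^2 + x₃^2)
         + (1/κ) * (μ / (4 * Real.sqrt ((1+x₁)^2 + x₂^2))
            + 1 / Real.sqrt ((1+x₁)^2 + x₂^2 + (2*μ+1)*x₃^2))
         + x₁))
    (x₁ x₂ : ℝ) (h : (1+x₁)^2 + x₂^2 ≠ 0) :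
    (∀ (ν ε : ℝ), 0 ≤ ε → ε < 1 →
        HasDerivAt (fun s => V s x₂ 0 ν ε) (-x₁) x₁ ∧
        HasDerivAt (fun s => V x₁ s 0 ν ε) (-x₂) x₂ ∧
        HasDerivAt (fun s => V x₁ x₂ s ν ε) 0 0)
      ↔ (1+x₁)^2 + x₂^2 = 1 := by
  have hd2pos : 0 < (1+x₁)^2 + x₂^2 := lt_of_le_of_ne (by positivity) (Ne.symm h)
  have hdpos : 0 < Real.sqrt ((1+x₁)^2 + x₂^2) := Real.sqrt_pos.mpr hd2pos
  have hκ0 : κ ≠ 0 := by rw [hκ]; positivity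
  -- clean form of V on x₃ = 0
  have hV0 : ∀ a b ν ε : ℝ, V a b 0 ν ε =
      (1/(1 + ε * Real.cos ν)) *
        (-(ε * Real.cos ν / 2) * (a^2 + b^2) + 1 / Real.sqrt ((1+a)^2 + b^2) + a) := by
    intro a b ν ε
    have e1 : ∀ D : ℝ, (1/κ) * (μ/(4*D) + 1/D) = 1/D := by
      intro D
      rcases eq_or_ne D 0 with hD | hD
      · simp [hD]
      · have hμ4 : μ + 4 ≠ 0 := by linarith
        rw [hκ]; field_simp
    rw [hV]
    rw [show ((1+a)^2 + b^2 + (2*μ+1)*(0:ℝ)^2) = (1+a)^2 + b^2 by ring]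
    rw [e1]
    ring
  -- derivative in first coordinate
  have key1 : ∀ ν ε : ℝ, HasDerivAt (fun s => V s x₂ 0 ν ε)
      ((1/(1 + ε * Real.cos ν)) *
        (-(ε * Real.cos ν) * x₁ - (1+x₁) / (Real.sqrt ((1+x₁)^2 + x₂^2))^3 + 1)) x₁ := by
    intro ν ε
    have hfun : (fun s => V s x₂ 0 ν ε) = fun s =>
        (1/(1 + ε * Real.cos ν)) *
          (-(ε * Real.cos ν / 2) * (s^2 + x₂^2) + 1 / Real.sqrt ((1+s)^2 + x₂^2) + s) := by
      funext s; rw [hV0]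
    rw [hfun]
    have hu : HasDerivAt (fun s : ℝ => (1+s)^2 + x₂^2) (2*(1+x₁)) x₁ := by
      have h1 : HasDerivAt (fun s : ℝ => 1 + s) 1 x₁ := (hasDerivAt_id x₁).const_add 1
      have := (h1.pow 2).add_const (x₂^2)
      simpa using this
    have h2 := aux_inv_sqrt _ _ _ hu hd2pos
    have h3 : HasDerivAt (fun s : ℝ => -(ε * Real.cos ν / 2) * (s^2 + x₂^2))
        (-(ε * Real.cos ν / 2) * (2 * x₁)) x₁ := by
      have := ((hasDerivAt_pow 2 x₁).add_const (x₂^2)).const_mul (-(ε * Real.cos ν / 2))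
      refine this.congr_deriv ?_
      norm_num
    have h5 := ((h3.add h2).add (hasDerivAt_id x₁)).const_mul (1/(1 + ε * Real.cos ν))
    refine h5.congr_deriv ?_
    ring
  -- derivative in second coordinate
  have key2 : ∀ ν ε : ℝ, HasDerivAt (fun s => V x₁ s 0 ν ε)
      ((1/(1 + ε * Real.cos ν)) *
        (-(ε * Real.cos ν) * x₂ - x₂ / (Real.sqrt ((1+x₁)^2 + x₂^2))^3)) x₂ := by
    intro ν ε
    have hfun : (fun s => V x₁ s 0 ν ε) = fun s =>
        (1/(1 + ε * Real.cos ν)) *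
          (-(ε * Real.cos ν / 2) * (x₁^2 + s^2) + 1 / Real.sqrt ((1+x₁)^2 + s^2) + x₁) := by
      funext s; rw [hV0]
    rw [hfun]
    have hu : HasDerivAt (fun s : ℝ => (1+x₁)^2 + s^2) (2*x₂) x₂ := by
      have := (hasDerivAt_pow 2 x₂).const_add ((1+x₁)^2)
      simpa using this
    have h2 := aux_inv_sqrt _ _ _ hu hd2pos
    have h3 : HasDerivAt (fun s : ℝ => -(ε * Real.cos ν / 2) * (x₁^2 + s^2))
        (-(ε * Real.cos ν / 2) * (2 * x₂)) x₂ := by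
      have := ((hasDerivAt_pow 2 x₂).const_add (x₁^2)).const_mul (-(ε * Real.cos ν / 2))
      refine this.congr_deriv ?_
      norm_num
    have h5 := ((h3.add h2).add_const x₁).const_mul (1/(1 + ε * Real.cos ν))
    refine h5.congr_deriv ?_
    ring
  -- derivative in third coordinate is always zero
  have key3 : ∀ ν ε : ℝ, HasDerivAt (fun s => V x₁ x₂ s ν ε) 0 0 := by
    intro ν ε
    have hfun : (fun s => V x₁ x₂ s ν ε) = fun s =>
        (1/(1 + ε * Real.cos ν)) *
          (-(ε * Real.cos ν / 2) * (x₁^2 + x₂^2 + s^2)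
           + (1/κ) * (μ / (4 * Real.sqrt ((1+x₁)^2 + x₂^2))
              + 1 / Real.sqrt ((1+x₁)^2 + x₂^2 + (2*μ+1)*s^2))
           + x₁) := by
      funext s; rw [hV]
    rw [hfun]
    have hu : HasDerivAt (fun s : ℝ => (1+x₁)^2 + x₂^2 + (2*μ+1)*s^2) 0 0 := by
      have := ((hasDerivAt_pow 2 (0:ℝ)).const_mul (2*μ+1)).const_add ((1+x₁)^2 + x₂^2)
      simpa using this
    have hu0 : (0:ℝ) < (1+x₁)^2 + x₂^2 + (2*μ+1)*(0:ℝ)^2 := by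
      nlinarith [hd2pos]
    have h2 := aux_inv_sqrt _ _ _ hu (by simpa using hu0)
    have h3 : HasDerivAt (fun s : ℝ => -(ε * Real.cos ν / 2) * (x₁^2 + x₂^2 + s^2))
        0 0 := by
      have := (((hasDerivAt_pow 2 (0:ℝ)).const_add (x₁^2 + x₂^2))).const_mul
        (-(ε * Real.cos ν / 2))
      simpa using this
    have h4 := (h2.const_add (μ / (4 * Real.sqrt ((1+x₁)^2 + x₂^2)))).const_mul (1/κ)
    have h5 := ((h3.add h4).add_const x₁).const_mul (1/(1 + ε * Real.cos ν))
    refine h5.congr_deriv ?_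
    simp
  constructor
  · intro H
    obtain ⟨H1, H2, -⟩ := H 0 0 le_rfl one_pos
    have e1 := H1.unique (key1 0 0)
    have e2 := H2.unique (key2 0 0)
    set d := Real.sqrt ((1+x₁)^2 + x₂^2) with hd
    norm_num at e1 e2
    have hd3 : d^3 ≠ 0 := by positivity
    have f1 : (1+x₁) = (1+x₁) * d^3 := by
      field_simp at e1
      linarith [e1]
    have f2 : x₂ = x₂ * d^3 := by
      field_simp at e2
      linarith [e2]
    have f3 : ((1+x₁)^2 + x₂^2) * (d^3 - 1) = 0 := by
      linear_combination (-(1+x₁))*f1 + (-x₂)*f2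
    have f4 : d^3 = 1 := by
      rcases mul_eq_zero.mp f3 with h' | h'
      · exact absurd h' h
      · linarith
    have f5 : d = 1 := by nlinarith [hdpos, sq_nonneg (d-1), sq_nonneg (d+1)]
    have := Real.sq_sqrt hd2pos.le
    rw [← hd, f5] at this
    linarith [this]
  · intro hone ν ε hε hε1
    have hcos : -1 ≤ Real.cos ν := Real.neg_one_le_cos ν
    have hc : 0 < 1 + ε * Real.cos ν := by nlinarith [mul_le_mul_of_nonneg_left hcos hε]
    have hd1 : Real.sqrt ((1+x₁)^2 + x₂^2) = 1 := by rw [hone, Real.sqrt_one]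
    refine ⟨?_, ?_, key3 ν ε⟩
    · have := key1 ν ε
      rw [hd1] at this
      convert this using 1
      field_simp
      ring
    · have := key2 ν ε
      rw [hd1] at this
      convert this using 1
      field_simp
      ring
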